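/- Dense counting lemma: For every graph H with vertex set {1,2,…,k} and every δ > 0, there exist ε > 0 and an integer n₀ such that the following holds. Let n ≥ n₀ and let G be a graph whose vertex set is a disjoint union V₁ ∪ … ∪ V_k of sets of size n. Assume that for each ij ∈ E(H), the bipartite subgraph of G induced between V_i and V_j is ε-regular and has density d_{ij}. Then the number of k-tuples (v₁,…,v_k) ∈ V₁ × … × V_k such that v_i v_j ∈ E(G) whenever ij ∈ E(H) is n^k (∏_{ij∈E(H)} d_{ij} ± δ), i.e., it differs from n^k ∏_{ij∈E(H)} d_{ij} by at most δ n^k. -/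

import Mathlib

open Finset Filter
open scoped Classical

/-- Number of ordered pairs `(x, y) ∈ X × Y` with `x` adjacent to `y` in `G`. -/
noncomputable def edgesBetween {V : Type} (G : SimpleGraph V) (X Y : Finset V) : ℕ :=
  ((X ×ˢ Y).filter fun pq => G.Adj pq.1 pq.2).card

/-- Edge density between `X` and `Y`. -/
noncomputable def density {V : Type} (G : SimpleGraph V) (X Y : Finset V) : ℝ :=
  (edgesBetween G X Y : ℝ) / ((X.card : ℝ) * (Y.card : ℝ))

/-- The pair `(A, B)` is `(ε, p)`-regular in `G`. -/
def IsRegularPair {V : Type} (G : SimpleGraph V) (A B : Finset V) (ε p : ℝ) : Prop :=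
  ∀ A' ⊆ A, ∀ B' ⊆ B, ε * A.card ≤ A'.card → ε * B.card ≤ B'.card →
    |density G A' B' - density G A B| ≤ ε * p

/-- The pair `(A, B)` is `(ε, d)`-lower-regular in `G`. -/
def IsLowerRegularPair {V : Type} (G : SimpleGraph V) (A B : Finset V) (ε d : ℝ) : Prop :=
  ∀ A' ⊆ A, ∀ B' ⊆ B, ε * A.card ≤ A'.card → ε * B.card ≤ B'.card →
    d ≤ density G A' B'

/-- Number of edges of `H` with both endpoints in `S`. -/
noncomputable def edgesWithin {V : Type} (H : SimpleGraph V) (S : Finset V) : ℕ :=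
  {e ∈ H.edgeSet | ∀ v ∈ e, v ∈ S}.ncard

/-- Number of edges of `H`. -/
noncomputable def edgeCount {V : Type} (H : SimpleGraph V) : ℕ := H.edgeSet.ncard

/-- The 2-density `m₂(H)`. -/
noncomputable def twoDensity {k : ℕ} (H : SimpleGraph (Fin k)) : ℝ :=
  max (1/2) (sSup {x : ℝ | ∃ S : Finset (Fin k), 3 ≤ S.card ∧
    x = ((edgesWithin H S : ℝ) - 1) / ((S.card : ℝ) - 2)})

/-- `H` is strictly balanced: every proper subgraph has strictly smaller 2-density. -/
def StrictlyBalanced {k : ℕ} (H : SimpleGraph (Fin k)) : Prop :=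
  ∀ H' : SimpleGraph (Fin k), H' ≤ H → H' ≠ H → twoDensity H' < twoDensity H

/-- `G` contains a copy of `H`. -/
def ContainsCopy {V W : Type} (H : SimpleGraph V) (G : SimpleGraph W) : Prop :=
  ∃ f : V → W, Function.Injective f ∧ ∀ a b, H.Adj a b → G.Adj (f a) (f b)

/-- Number of canonical copies of `H` in `G` w.r.t. the parts `P`. -/
noncomputable def canonicalCount {k : ℕ} {W : Type} (H : SimpleGraph (Fin k))
    (G : SimpleGraph W) (P : Fin k → Finset W) : ℕ :=
  {f : Fin k → W | (∀ i, f i ∈ P i) ∧ ∀ i j, H.Adj i j → G.Adj (f i) (f j)}.ncard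

/-- Probability that `G_{n,p}` satisfies the predicate `P`. -/
noncomputable def gnpProb (n : ℕ) (p : ℝ) (P : SimpleGraph (Fin n) → Prop) : ℝ :=
  ∑ G ∈ Finset.univ.filter P, p ^ edgeCount G * (1 - p) ^ (n.choose 2 - edgeCount G)

/-- Probability that the `p`-random subgraph `G_p` of `G` satisfies the predicate `P`. -/
noncomputable def subgraphProb {V : Type} [Fintype V] [DecidableEq V] (G : SimpleGraph V)
    (p : ℝ) (P : SimpleGraph V → Prop) : ℝ :=
  ∑ G' ∈ Finset.univ.filter (fun G' => G' ≤ G ∧ P G'),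
    p ^ edgeCount G' * (1 - p) ^ (edgeCount G - edgeCount G')

/-- The chromatic number of `H`, as a natural number. -/
noncomputable def chrom {k : ℕ} (H : SimpleGraph (Fin k)) : ℕ := H.chromaticNumber.toNat

/-- The edges of `H`, each represented once as an ordered pair `(i, j)` with `i < j`. -/
noncomputable def hPairs {k : ℕ} (H : SimpleGraph (Fin k)) : Finset (Fin k × Fin k) :=
  Finset.univ.filter fun ij => H.Adj ij.1 ij.2 ∧ ij.1 < ij.2

/-- Membership in `𝒢(H, n, m, p, ε)` (with parts `P`, inside ambient vertex type). -/
def InG {k N : ℕ} (H : SimpleGraph (Fin k)) (G : SimpleGraph (Fin N))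
    (P : Fin k → Finset (Fin N)) (n m : ℕ) (p ε : ℝ) : Prop :=
  (∀ i j, i ≠ j → Disjoint (P i) (P j)) ∧
  (∀ i, (P i).card = n) ∧
  (∀ u v, G.Adj u v → ∃ i j, H.Adj i j ∧ u ∈ P i ∧ v ∈ P j) ∧
  (∀ i j, H.Adj i j → IsRegularPair G (P i) (P j) ε p) ∧
  (∀ i j, H.Adj i j → edgesBetween G (P i) (P j) = m)

/-- Membership in `𝒢_ℓ(H, n, d, ε)` (lower-regular pairs, parts `P` covering the vertex set). -/
def InGl {k : ℕ} {W : Type} (H : SimpleGraph (Fin k)) (G : SimpleGraph W)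
    (P : Fin k → Finset W) (n : ℕ) (d ε : ℝ) : Prop :=
  (∀ i j, i ≠ j → Disjoint (P i) (P j)) ∧
  (∀ i, (P i).card = n) ∧
  (∀ v, ∃ i, v ∈ P i) ∧
  (∀ u v, G.Adj u v → ∃ i j, H.Adj i j ∧ u ∈ P i ∧ v ∈ P j) ∧
  (∀ i j, H.Adj i j → IsLowerRegularPair G (P i) (P j) ε d)

/-- `|𝒞(H,G;H',G')|`: canonical copies of `H` in `G` whose `H'`-edges lie in `G'`. -/
noncomputable def restrictedCount {k : ℕ} {W : Type} (H : SimpleGraph (Fin k))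
    (G : SimpleGraph W) (H' : SimpleGraph (Fin k)) (G' : SimpleGraph W)
    (P : Fin k → Finset W) : ℕ :=
  {f : Fin k → W | (∀ i, f i ∈ P i) ∧ (∀ i j, H.Adj i j → G.Adj (f i) (f j)) ∧
    (∀ i j, H'.Adj i j → G'.Adj (f i) (f j))}.ncard

/-- Number of copies of `H` in `G`, i.e. subgraphs of `G` isomorphic to `H`. -/
noncomputable def copyCount {k : ℕ} {W : Type} (H : SimpleGraph (Fin k))
    (G : SimpleGraph W) : ℕ :=
  {G' : G.Subgraph | Nonempty (G'.coe ≃g H)}.ncard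

/-- Number of `k`-cliques of `G`. -/
noncomputable def cliqueCount {V : Type} (k : ℕ) (G : SimpleGraph V) : ℕ :=
  {s : Finset V | G.IsNClique k s}.ncard

/-- `g_k(ρ, n)`: minimum number of `K_k`s in an `n`-vertex graph with at least `ρ·C(n,2)` edges. -/
noncomputable def gkn (k n : ℕ) (ρ : ℝ) : ℕ :=
  sInf {m : ℕ | ∃ G : SimpleGraph (Fin n),
    ρ * (n.choose 2 : ℝ) ≤ (edgeCount G : ℝ) ∧ cliqueCount k G = m}

/-- The clique density function `g_k(ρ) = lim_{n → ∞} g_k(ρ, n)/C(n,k)`. -/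
noncomputable def gk (k : ℕ) (ρ : ℝ) : ℝ :=
  limUnder atTop (fun n => (gkn k n ρ : ℝ) / (n.choose k : ℝ))

/-- `G` is `(η, p, D)`-upper-uniform. -/
def UpperUniform {V : Type} [Fintype V] (G : SimpleGraph V) (η p D : ℝ) : Prop :=
  ∀ U₁ U₂ : Finset V, Disjoint U₁ U₂ →
    η * (Fintype.card V : ℝ) ≤ U₁.card → η * (Fintype.card V : ℝ) ≤ U₂.card →
    density G U₁ U₂ ≤ D * p

/-- `G` is `(η, p, D)`-upper-uniform, also for edges inside a single set. -/
def UpperUniform' {V : Type} [Fintype V] (G : SimpleGraph V) (η p D : ℝ) : Prop :=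
  UpperUniform G η p D ∧
  ∀ U : Finset V, η * (Fintype.card V : ℝ) ≤ U.card →
    (edgesWithin G U : ℝ) ≤ D * p * (U.card.choose 2 : ℝ)

/-- `H` is a star forest. -/
def IsStarForest {V : Type} (H : SimpleGraph V) : Prop :=
  ∃ c : V → V, ∀ u v, H.Adj u v → c u = c v ∧ (c u = u ∨ c u = v)

/-- `G` is `(H, r)`-Ramsey. -/
def IsRamsey {k n : ℕ} (H : SimpleGraph (Fin k)) (r : ℕ) (G : SimpleGraph (Fin n)) : Prop :=
  ∀ col : Sym2 (Fin n) → Fin r, ∃ c : Fin r, ∃ f : Fin k → Fin n, Function.Injective f ∧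
    ∀ a b, H.Adj a b → G.Adj (f a) (f b) ∧ col s(f a, f b) = c

/-- `G` is `(H, ε)`-Turán. -/
def IsTuran {k n : ℕ} (H : SimpleGraph (Fin k)) (ε : ℝ) (G : SimpleGraph (Fin n)) : Prop :=
  ∀ G' : SimpleGraph (Fin n), G' ≤ G →
    (1 - 1 / ((chrom H : ℝ) - 1) + ε) * (edgeCount G : ℝ) ≤ (edgeCount G' : ℝ) →
    ContainsCopy H G'

/-- The normalized homomorphism count `μ_H(G)`. -/
noncomputable def muH {k N : ℕ} (H : SimpleGraph (Fin k)) (G : SimpleGraph (Fin N)) : ℝ :=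
  (∑ f : Fin k → Fin N, ∏ ij ∈ hPairs H, (if G.Adj (f ij.1) (f ij.2) then (1:ℝ) else 0))
    / (N : ℝ) ^ k

/-- Membership in `H*(V₁, …, V_k)`: all edges lie between pairs `Vᵢ, Vⱼ` with `ij ∈ E(H)`. -/
def InHstar {k N : ℕ} (H : SimpleGraph (Fin k)) (G : SimpleGraph (Fin N))
    (P : Fin k → Finset (Fin N)) : Prop :=
  ∀ u v, G.Adj u v → ∃ i j, H.Adj i j ∧ u ∈ P i ∧ v ∈ P j

/-- The normalized canonical homomorphism count `μ*_H(G)`. -/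
noncomputable def muHstar {k N : ℕ} (H : SimpleGraph (Fin k)) (G : SimpleGraph (Fin N))
    (P : Fin k → Finset (Fin N)) : ℝ :=
  (∑ f ∈ Finset.univ.filter (fun f : Fin k → Fin N => ∀ i, f i ∈ P i),
    ∏ ij ∈ hPairs H, (if G.Adj (f ij.1) (f ij.2) then (1:ℝ) else 0)) / (N : ℝ) ^ k

/- ===== auxiliary development for the dense counting lemma ===== -/
section DenseCountingAux
set_option linter.unusedSectionVars false

variable {k : ℕ} {W : Type} [Fintype W]

/-- Edge indicator. -/
noncomputable def chiDC (G : SimpleGraph W) (s : Fin k × Fin k) (f : Fin k → W) : ℝ :=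
  if G.Adj (f s.1) (f s.2) then 1 else 0

lemma edgesBetween_le_card (G : SimpleGraph W) (X Y : Finset W) :
    edgesBetween G X Y ≤ X.card * Y.card := by
  classical
  calc ((X ×ˢ Y).filter fun pq => G.Adj pq.1 pq.2).card ≤ (X ×ˢ Y).card :=
        Finset.card_filter_le _ _
    _ = X.card * Y.card := Finset.card_product _ _

lemma density_nonneg (G : SimpleGraph W) (X Y : Finset W) : 0 ≤ density G X Y :=
  div_nonneg (by positivity) (by positivity)

lemma density_le_one (G : SimpleGraph W) (X Y : Finset W) : density G X Y ≤ 1 := by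
  apply div_le_one_of_le₀
  · exact_mod_cast edgesBetween_le_card G X Y
  · positivity

lemma edgesBetween_eq_sum (G : SimpleGraph W) (A B : Finset W) :
    (edgesBetween G A B : ℝ) = ∑ x ∈ A, ∑ y ∈ B, (if G.Adj x y then (1:ℝ) else 0) := by
  classical
  rw [edgesBetween, Finset.card_filter]
  push_cast
  rw [Finset.sum_product]

lemma key_bound {G : SimpleGraph W} {A B : Finset W} {ε : ℝ} (hε : 0 < ε)
    (hreg : IsRegularPair G A B ε 1) {A' B' : Finset W} (hA' : A' ⊆ A) (hB' : B' ⊆ B) :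
    |(edgesBetween G A' B' : ℝ) - density G A B * A'.card * B'.card|
      ≤ ε * A.card * B.card := by
  set d := density G A B with hd
  have hd0 : 0 ≤ d := density_nonneg G A B
  have hd1 : d ≤ 1 := density_le_one G A B
  have hA'A : (A'.card : ℝ) ≤ A.card := by exact_mod_cast Finset.card_le_card hA'
  have hB'B : (B'.card : ℝ) ≤ B.card := by exact_mod_cast Finset.card_le_card hB'
  have hA0 : (0:ℝ) ≤ A'.card := by positivity
  have hB0 : (0:ℝ) ≤ B'.card := by positivity
  have he_le : (edgesBetween G A' B' : ℝ) ≤ (A'.card : ℝ) * B'.card := by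
    exact_mod_cast edgesBetween_le_card G A' B'
  have he0 : (0:ℝ) ≤ (edgesBetween G A' B' : ℝ) := by positivity
  -- general crude bound when |A'||B'| ≤ ε|A||B|
  have crude : (A'.card : ℝ) * B'.card ≤ ε * A.card * B.card →
      |(edgesBetween G A' B' : ℝ) - d * A'.card * B'.card| ≤ ε * A.card * B.card := by
    intro hsmall
    rw [abs_sub_le_iff]
    constructor
    · nlinarith
    · nlinarith
  by_cases hc : ε * A.card ≤ A'.card ∧ ε * B.card ≤ B'.card
  · rcases Nat.eq_zero_or_pos A'.card with h0 | hA'pos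
    · apply crude
      have h0' : ((A'.card : ℝ)) = 0 := by exact_mod_cast h0
      rw [h0', zero_mul]; positivity
    rcases Nat.eq_zero_or_pos B'.card with h0 | hB'pos
    · apply crude
      have h0' : ((B'.card : ℝ)) = 0 := by exact_mod_cast h0
      rw [h0', mul_zero]; positivity
    have hreg' := hreg A' hA' B' hB' hc.1 hc.2
    rw [mul_one] at hreg'
    have hab : ((A'.card : ℝ) * B'.card) ≠ 0 := by positivity
    have hden : (edgesBetween G A' B' : ℝ) = density G A' B' * (A'.card * B'.card) := by
      rw [density, div_mul_cancel₀ _ hab]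
    calc |(edgesBetween G A' B' : ℝ) - d * A'.card * B'.card|
        = |density G A' B' - d| * (A'.card * B'.card) := by
          rw [hden, show density G A' B' * ((A'.card:ℝ) * B'.card) - d * A'.card * B'.card
              = (density G A' B' - d) * ((A'.card:ℝ) * B'.card) by ring, abs_mul,
            abs_of_nonneg (by positivity : (0:ℝ) ≤ (A'.card:ℝ) * B'.card)]
      _ ≤ ε * (A.card * B.card) := by
          apply mul_le_mul hreg' (by nlinarith) (by positivity) (le_of_lt hε)
      _ = ε * A.card * B.card := by ring
  · apply crude
    rw [not_and_or] at hc
    rcases hc with hc | hc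
    · push_neg at hc; nlinarith
    · push_neg at hc; nlinarith


lemma chi_congr {G : SimpleGraph W} {s : Fin k × Fin k} {f f' : Fin k → W}
    (h1 : f s.1 = f' s.1) (h2 : f s.2 = f' s.2) : chiDC G s f = chiDC G s f' := by
  simp [chiDC, h1, h2]

lemma prod_chi_boole (G : SimpleGraph W) (S : Finset (Fin k × Fin k)) (f : Fin k → W) :
    ∏ s ∈ S, chiDC G s f = if ∀ s ∈ S, G.Adj (f s.1) (f s.2) then 1 else 0 := by
  by_cases h : ∀ s ∈ S, G.Adj (f s.1) (f s.2)
  · rw [if_pos h]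
    exact Finset.prod_eq_one fun s hs => by simp [chiDC, h s hs]
  · rw [if_neg h]
    push_neg at h
    obtain ⟨s, hs, hns⟩ := h
    exact Finset.prod_eq_zero hs (by simp [chiDC, hns])

lemma step_bound {n : ℕ} (hn : 1 ≤ n) (H : SimpleGraph (Fin k)) (G : SimpleGraph W)
    (P : Fin k → Finset W) (hcard : ∀ i, (P i).card = n) {ε : ℝ} (hε : 0 < ε)
    (hreg : ∀ i j, H.Adj i j → IsRegularPair G (P i) (P j) ε 1)
    {e : Fin k × Fin k} (he : e ∈ hPairs H) {S : Finset (Fin k × Fin k)}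
    (hS : S ⊆ hPairs H) (heS : e ∉ S) :
    |∑ f ∈ Fintype.piFinset P,
        (∏ s ∈ S, chiDC G s f) * (chiDC G e f - density G (P e.1) (P e.2))|
      ≤ ε * (n : ℝ) ^ k := by
  classical
  obtain ⟨a, b⟩ := e
  simp only [hPairs, Finset.mem_filter, Finset.mem_univ, true_and] at he
  obtain ⟨hadj, hlt⟩ := he
  have hab : a ≠ b := ne_of_lt hlt
  have hne : ∀ i, (P i).Nonempty := fun i => Finset.card_pos.mp (by rw [hcard i]; omega)
  set z : ∀ i, W := fun i => (hne i).choose with hzdef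
  have hz : ∀ i, z i ∈ P i := fun i => (hne i).choose_spec
  set Q : Fin k → Finset W := fun i => if i = a ∨ i = b then ({z i} : Finset W) else P i
    with hQdef
  set d : ℝ := density G (P a) (P b) with hddef
  set F : (Fin k → W) → ℝ :=
    fun f => (∏ s ∈ S, chiDC G s f) * (chiDC G (a, b) f - d) with hFdef
  set upd : W → W → (Fin k → W) → Fin k → W :=
    fun x y g => Function.update (Function.update g a x) b y with hupddef
  have hupd_a : ∀ x y g, upd x y g a = x := by
    intro x y g
    simp [hupddef, Function.update_of_ne hab, Function.update_self]
  have hupd_b : ∀ x y g, upd x y g b = y := by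
    intro x y g; simp [hupddef, Function.update_self]
  have hupd_ne_b : ∀ x y g c, c ≠ b → upd x y g c = Function.update g a x c := by
    intro x y g c hc; simp [hupddef, Function.update_of_ne hc]
  have hupd_ne_a : ∀ x y g c, c ≠ a → upd x y g c = Function.update g b y c := by
    intro x y g c hc
    by_cases hcb : c = b
    · subst hcb; simp [hupddef, Function.update_self]
    · simp [hupddef, Function.update_of_ne hcb, Function.update_of_ne hc]
  have hupd_other : ∀ x y g c, c ≠ a → c ≠ b → upd x y g c = g c := by
    intro x y g c hca hcb
    rw [hupd_ne_b x y g c hcb, Function.update_of_ne hca]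
  -- reindex the sum
  have hsum : ∑ f ∈ Fintype.piFinset P, F f
      = ∑ p ∈ (P a ×ˢ P b) ×ˢ Fintype.piFinset Q, F (upd p.1.1 p.1.2 p.2) := by
    refine Finset.sum_nbij'
      (fun f => ((f a, f b), fun c => if c = a ∨ c = b then z c else f c))
      (fun p => upd p.1.1 p.1.2 p.2) ?_ ?_ ?_ ?_ ?_
    · intro f hf
      rw [Fintype.mem_piFinset] at hf
      rw [Finset.mem_product]
      refine ⟨?_, ?_⟩
      · rw [Finset.mem_product]; exact ⟨hf a, hf b⟩
      · rw [Fintype.mem_piFinset]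
        intro c
        by_cases hc : c = a ∨ c = b
        · simp [hQdef, hc]
        · simp [hQdef, hc, hf c]
    · intro p hp
      rw [Finset.mem_product, Finset.mem_product, Fintype.mem_piFinset] at hp
      rw [Fintype.mem_piFinset]
      intro c
      by_cases hcb : c = b
      · subst hcb; rw [hupd_b]; exact hp.1.2
      by_cases hca : c = a
      · subst hca; rw [hupd_a]; exact hp.1.1
      · rw [hupd_other _ _ _ _ hca hcb]
        have := hp.2 c
        simpa [hQdef, hca, hcb] using this
    · intro f hf
      dsimp only
      funext c
      by_cases hcb : c = b
      · subst hcb; rw [hupd_b]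
      by_cases hca : c = a
      · subst hca; rw [hupd_a]
      · rw [hupd_other _ _ _ _ hca hcb]
        simp [hca, hcb]
    · intro p hp
      rw [Finset.mem_product, Finset.mem_product, Fintype.mem_piFinset] at hp
      have hgz : ∀ c, (c = a ∨ c = b) → p.2 c = z c := by
        intro c hc
        have := hp.2 c
        simp only [hQdef, hc, if_true, Finset.mem_singleton] at this
        exact this
      refine Prod.ext (Prod.ext ?_ ?_) ?_
      · exact hupd_a _ _ _
      · exact hupd_b _ _ _
      · funext c
        by_cases hc : c = a ∨ c = b
        · simp only [hc, if_true]
          exact (hgz c hc).symm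
        · simp only [hc, if_false]
          push_neg at hc
          exact hupd_other _ _ _ _ hc.1 hc.2
    · intro f hf
      dsimp only
      congr 1
      funext c
      by_cases hcb : c = b
      · subst hcb; rw [hupd_b]
      by_cases hca : c = a
      · subst hca; rw [hupd_a]
      · rw [hupd_other _ _ _ _ hca hcb]; simp [hca, hcb]
  rw [hsum, Finset.sum_product, Finset.sum_comm]
  -- now a per-g bound
  have hinner : ∀ g ∈ Fintype.piFinset Q,
      |∑ xy ∈ P a ×ˢ P b, F (upd xy.1 xy.2 g)| ≤ ε * (n : ℝ) * n := by
    intro g hg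
    rw [Finset.sum_product]
    set pa : Fin k × Fin k → Prop := fun s => s.1 = a ∨ s.2 = a with hpadef
    set pb : Fin k × Fin k → Prop := fun s => s.1 = b ∨ s.2 = b with hpbdef
    set Sa := S.filter pa with hSadef
    set Sb := (S.filter fun s => ¬ pa s).filter pb with hSbdef
    set Sc := (S.filter fun s => ¬ pa s).filter (fun s => ¬ pb s) with hScdef
    have hSamem : ∀ s ∈ Sa, s.1 ≠ b ∧ s.2 ≠ b := by
      intro s hs
      rw [hSadef, Finset.mem_filter] at hs
      have hsH := hS hs.1
      simp only [hPairs, Finset.mem_filter, Finset.mem_univ, true_and] at hsH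
      constructor
      · intro h1b
        rcases hs.2 with h | h
        · exact hab (h1b.symm.trans h).symm
        · have hba : b < a := by rw [← h1b, ← h]; exact hsH.2
          exact absurd hlt (not_lt.mpr hba.le)
      · intro h2b
        rcases hs.2 with h | h
        · apply heS
          have hse : s = (a, b) := Prod.ext h h2b
          rw [← hse]
          exact hs.1
        · exact hab (h.symm.trans h2b)
    have hSbmem : ∀ s ∈ Sb, s.1 ≠ a ∧ s.2 ≠ a := by
      intro s hs
      rw [hSbdef, Finset.mem_filter, Finset.mem_filter] at hs
      have h0 := hs.1.2
      exact ⟨fun h => h0 (Or.inl h), fun h => h0 (Or.inr h)⟩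
    have hScmem : ∀ s ∈ Sc, (s.1 ≠ a ∧ s.2 ≠ a) ∧ (s.1 ≠ b ∧ s.2 ≠ b) := by
      intro s hs
      rw [hScdef, Finset.mem_filter, Finset.mem_filter] at hs
      have h1 := hs.1.2
      have h2 := hs.2
      exact ⟨⟨fun h => h1 (Or.inl h), fun h => h1 (Or.inr h)⟩,
        ⟨fun h => h2 (Or.inl h), fun h => h2 (Or.inr h)⟩⟩
    -- factor the product
    have hfactor : ∀ x y, (∏ s ∈ S, chiDC G s (upd x y g))
        = (∏ s ∈ Sa, chiDC G s (Function.update g a x))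
          * ((∏ s ∈ Sb, chiDC G s (Function.update g b y))
            * (∏ s ∈ Sc, chiDC G s g)) := by
      intro x y
      rw [← Finset.prod_filter_mul_prod_filter_not S pa (chiDC G · (upd x y g)),
        ← Finset.prod_filter_mul_prod_filter_not (S.filter fun s => ¬ pa s) pb
          (chiDC G · (upd x y g))]
      congr 1
      · apply Finset.prod_congr rfl
        intro s hs
        have h := hSamem s hs
        exact chi_congr (hupd_ne_b x y g _ h.1) (hupd_ne_b x y g _ h.2)
      congr 1
      · apply Finset.prod_congr rfl
        intro s hs
        have h := hSbmem s hs
        exact chi_congr (hupd_ne_a x y g _ h.1) (hupd_ne_a x y g _ h.2)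
      · apply Finset.prod_congr rfl
        intro s hs
        have h := hScmem s hs
        exact chi_congr (hupd_other x y g _ h.1.1 h.2.1) (hupd_other x y g _ h.1.2 h.2.2)
    have hchiab : ∀ x y, chiDC G (a, b) (upd x y g) = if G.Adj x y then (1:ℝ) else 0 := by
      intro x y
      simp [chiDC, hupd_a, hupd_b]
    by_cases hc0 : ∀ s ∈ Sc, G.Adj (g s.1) (g s.2)
    case neg =>
      have : ∀ x ∈ P a, ∀ y ∈ P b, F (upd x y g) = 0 := by
        intro x hx y hy
        rw [hFdef]
        simp only
        rw [hfactor, prod_chi_boole G Sc g, if_neg hc0]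
        ring
      rw [Finset.sum_congr rfl (fun x hx => Finset.sum_congr rfl (fun y hy => this x hx y hy))]
      simp only [Finset.sum_const_zero, abs_zero]
      positivity
    case pos =>
      set A' := (P a).filter
        (fun x => ∀ s ∈ Sa, G.Adj (Function.update g a x s.1) (Function.update g a x s.2))
        with hA'def
      set B' := (P b).filter
        (fun y => ∀ s ∈ Sb, G.Adj (Function.update g b y s.1) (Function.update g b y s.2))
        with hB'def
      have hrw : ∑ x ∈ P a, ∑ y ∈ P b, F (upd x y g)
          = ∑ x ∈ A', ∑ y ∈ B', ((if G.Adj x y then (1:ℝ) else 0) - d) := by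
        rw [hA'def, Finset.sum_filter]
        apply Finset.sum_congr rfl
        intro x hx
        rw [hB'def, Finset.sum_filter]
        by_cases hux : ∀ s ∈ Sa, G.Adj (Function.update g a x s.1) (Function.update g a x s.2)
        · rw [if_pos hux]
          apply Finset.sum_congr rfl
          intro y hy
          by_cases huy : ∀ s ∈ Sb, G.Adj (Function.update g b y s.1) (Function.update g b y s.2)
          · rw [if_pos huy, hFdef]
            simp only
            rw [hfactor, prod_chi_boole, prod_chi_boole, prod_chi_boole,
              if_pos hux, if_pos huy, if_pos hc0, hchiab]
            ring
          · rw [if_neg huy, hFdef]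
            simp only
            rw [hfactor, prod_chi_boole, prod_chi_boole, prod_chi_boole,
              if_neg huy]
            ring
        · rw [if_neg hux]
          rw [← Finset.sum_const_zero (s := P b)]
          apply Finset.sum_congr rfl
          intro y hy
          rw [hFdef]
          simp only
          rw [hfactor, prod_chi_boole, prod_chi_boole, prod_chi_boole, if_neg hux]
          ring
      rw [hrw]
      have hsplit : ∑ x ∈ A', ∑ y ∈ B', ((if G.Adj x y then (1:ℝ) else 0) - d)
          = (edgesBetween G A' B' : ℝ) - d * A'.card * B'.card := by
        have h1 : ∀ x, ∑ y ∈ B', ((if G.Adj x y then (1:ℝ) else 0) - d)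
            = (∑ y ∈ B', (if G.Adj x y then (1:ℝ) else 0)) - (B'.card : ℝ) * d := by
          intro x
          rw [Finset.sum_sub_distrib, Finset.sum_const, nsmul_eq_mul]
        rw [Finset.sum_congr rfl (fun x _ => h1 x), Finset.sum_sub_distrib,
          Finset.sum_const, nsmul_eq_mul, ← edgesBetween_eq_sum]
        ring
      rw [hsplit]
      have := key_bound hε (hreg a b hadj)
        (Finset.filter_subset (fun x => ∀ s ∈ Sa,
          G.Adj (Function.update g a x s.1) (Function.update g a x s.2)) (P a))
        (Finset.filter_subset (fun y => ∀ s ∈ Sb,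
          G.Adj (Function.update g b y s.1) (Function.update g b y s.2)) (P b))
      rw [hcard a, hcard b] at this
      exact this
  calc |∑ g ∈ Fintype.piFinset Q, ∑ xy ∈ P a ×ˢ P b, F (upd xy.1 xy.2 g)|
      ≤ ∑ g ∈ Fintype.piFinset Q, |∑ xy ∈ P a ×ˢ P b, F (upd xy.1 xy.2 g)| :=
        Finset.abs_sum_le_sum_abs _ _
    _ ≤ ∑ _g ∈ Fintype.piFinset Q, (ε * (n : ℝ) * n) := Finset.sum_le_sum hinner
    _ = ((Fintype.piFinset Q).card : ℝ) * (ε * n * n) := by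
        rw [Finset.sum_const, nsmul_eq_mul]
    _ = ε * (n : ℝ) ^ k := by
        rw [Fintype.card_piFinset]
        have hQa : (Q a).card = 1 := by simp [hQdef]
        have hQb : (Q b).card = 1 := by simp [hQdef]
        have hbmem : b ∈ Finset.univ.erase a :=
          Finset.mem_erase.mpr ⟨hab.symm, Finset.mem_univ b⟩
        have hprodQ : (∏ i, (Q i).card)
            = ∏ i ∈ (Finset.univ.erase a).erase b, (P i).card := by
          rw [← Finset.mul_prod_erase Finset.univ _ (Finset.mem_univ a),
            ← Finset.mul_prod_erase _ _ hbmem, hQa, hQb, one_mul, one_mul]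
          apply Finset.prod_congr rfl
          intro i hi
          rw [Finset.mem_erase, Finset.mem_erase] at hi
          simp [hQdef, hi.1, hi.2.1]
        have hprodP : (∏ i, (P i).card) = n ^ k := by
          simp [hcard, Finset.prod_const, Finset.card_univ]
        have hkey : (∏ i, (Q i).card) * n * n = n ^ k := by
          rw [hprodQ, ← hprodP,
            ← Finset.mul_prod_erase Finset.univ _ (Finset.mem_univ a),
            ← Finset.mul_prod_erase _ _ hbmem, hcard a, hcard b]
          ring
        have hkey' : ((∏ i, (Q i).card : ℕ) : ℝ) * n * n = (n : ℝ) ^ k := by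
          exact_mod_cast congrArg (Nat.cast : ℕ → ℝ) hkey
        calc ((∏ i, (Q i).card : ℕ) : ℝ) * (ε * n * n)
            = ε * (((∏ i, (Q i).card : ℕ) : ℝ) * n * n) := by ring
          _ = ε * (n : ℝ) ^ k := by rw [hkey']

lemma core_bound {n : ℕ} (hn : 1 ≤ n) (H : SimpleGraph (Fin k)) (G : SimpleGraph W)
    (P : Fin k → Finset W) (hcard : ∀ i, (P i).card = n) {ε : ℝ} (hε : 0 < ε)
    (hreg : ∀ i j, H.Adj i j → IsRegularPair G (P i) (P j) ε 1)
    (S : Finset (Fin k × Fin k)) (hS : S ⊆ hPairs H) :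
    |(∑ f ∈ Fintype.piFinset P, ∏ s ∈ S, chiDC G s f)
        - (n : ℝ) ^ k * ∏ s ∈ S, density G (P s.1) (P s.2)|
      ≤ (S.card : ℝ) * (ε * (n : ℝ) ^ k) := by
  classical
  induction S using Finset.induction_on with
  | empty =>
      have hone : ∑ f ∈ Fintype.piFinset P, (1:ℝ) = (n:ℝ)^k := by
        rw [Finset.sum_const, nsmul_eq_mul, mul_one, Fintype.card_piFinset]
        push_cast
        simp [hcard, Finset.prod_const, Finset.card_univ]
      simp only [Finset.prod_empty, mul_one, Finset.card_empty, Nat.cast_zero, zero_mul]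
      rw [hone]
      simp
  | @insert e S heS ih =>
      have heH : e ∈ hPairs H := hS (Finset.mem_insert_self e S)
      have hSH : S ⊆ hPairs H := fun s hs => hS (Finset.mem_insert_of_mem hs)
      have ihb := ih hSH
      have hd0 : 0 ≤ density G (P e.1) (P e.2) := density_nonneg G _ _
      have hd1 : density G (P e.1) (P e.2) ≤ 1 := density_le_one G _ _
      have hstep := step_bound hn H G P hcard hε hreg heH hSH heS
      have hYX : ∑ f ∈ Fintype.piFinset P,
            (∏ s ∈ S, chiDC G s f) * (chiDC G e f - density G (P e.1) (P e.2))
          = (∑ f ∈ Fintype.piFinset P, ∏ s ∈ insert e S, chiDC G s f)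
            - density G (P e.1) (P e.2) * ∑ f ∈ Fintype.piFinset P, ∏ s ∈ S, chiDC G s f := by
        have hterm : ∀ f, (∏ s ∈ S, chiDC G s f) * (chiDC G e f - density G (P e.1) (P e.2))
            = (∏ s ∈ insert e S, chiDC G s f)
              - density G (P e.1) (P e.2) * (∏ s ∈ S, chiDC G s f) := by
          intro f
          rw [Finset.prod_insert heS]
          ring
        rw [Finset.sum_congr rfl fun f _ => hterm f, Finset.sum_sub_distrib, ← Finset.mul_sum]
      rw [hYX] at hstep
      have hid : (∑ f ∈ Fintype.piFinset P, ∏ s ∈ insert e S, chiDC G s f)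
            - (n : ℝ) ^ k * ∏ s ∈ insert e S, density G (P s.1) (P s.2)
          = ((∑ f ∈ Fintype.piFinset P, ∏ s ∈ insert e S, chiDC G s f)
              - density G (P e.1) (P e.2) * ∑ f ∈ Fintype.piFinset P, ∏ s ∈ S, chiDC G s f)
            + density G (P e.1) (P e.2)
              * ((∑ f ∈ Fintype.piFinset P, ∏ s ∈ S, chiDC G s f)
                - (n : ℝ) ^ k * ∏ s ∈ S, density G (P s.1) (P s.2)) := by
        rw [Finset.prod_insert heS]
        ring
      rw [hid]
      calc |_ + _| ≤ _ := abs_add_le _ _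
        _ ≤ ε * (n:ℝ)^k + 1 * ((S.card : ℝ) * (ε * (n:ℝ)^k)) := by
            apply add_le_add hstep
            rw [abs_mul, abs_of_nonneg hd0, one_mul]
            calc density G (P e.1) (P e.2) * |_| ≤ 1 * |_| := by
                  apply mul_le_mul_of_nonneg_right hd1 (abs_nonneg _)
              _ = _ := one_mul _
              _ ≤ (S.card : ℝ) * (ε * (n:ℝ)^k) := ihb
        _ ≤ ((insert e S).card : ℝ) * (ε * (n:ℝ)^k) := by
            rw [Finset.card_insert_of_notMem heS]
            push_cast
            apply le_of_eq
            ring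

end DenseCountingAux


/-- Dense counting lemma. -/
theorem dense_counting_lemma (k : ℕ) (H : SimpleGraph (Fin k)) (δ : ℝ) (hδ : 0 < δ) :
    ∃ (ε : ℝ) (n₀ : ℕ), 0 < ε ∧
      ∀ n : ℕ, n₀ ≤ n →
      ∀ (W : Type) [Fintype W], ∀ (G : SimpleGraph W) (P : Fin k → Finset W),
        (∀ i j, i ≠ j → Disjoint (P i) (P j)) →
        (∀ v, ∃ i, v ∈ P i) →
        (∀ i, (P i).card = n) →
        (∀ i j, H.Adj i j → IsRegularPair G (P i) (P j) ε 1) →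
        |(canonicalCount H G P : ℝ) -
            (n : ℝ) ^ k * ∏ ij ∈ hPairs H, density G (P ij.1) (P ij.2)|
          ≤ δ * (n : ℝ) ^ k := by
    classical
  refine ⟨δ / (((hPairs H).card : ℝ) + 1), 1, by positivity, ?_⟩
  intro n hn W _ G P hdisj hcover hcard hreg
  have hε : 0 < δ / (((hPairs H).card : ℝ) + 1) := by positivity
  have hcc : (canonicalCount H G P : ℝ)
      = ∑ f ∈ Fintype.piFinset P, ∏ s ∈ hPairs H, chiDC G s f := by
    have hset : {f : Fin k → W | (∀ i, f i ∈ P i) ∧ ∀ i j, H.Adj i j → G.Adj (f i) (f j)}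
        = ↑((Fintype.piFinset P).filter fun f => ∀ s ∈ hPairs H, G.Adj (f s.1) (f s.2)) := by
      ext f
      simp only [Set.mem_setOf_eq, Finset.coe_filter, Fintype.mem_piFinset, Set.mem_setOf_eq]
      constructor
      · rintro ⟨h1, h2⟩
        refine ⟨h1, fun s hs => ?_⟩
        simp only [hPairs, Finset.mem_filter, Finset.mem_univ, true_and] at hs
        exact h2 _ _ hs.1
      · rintro ⟨h1, h2⟩
        refine ⟨h1, fun i j hadj => ?_⟩
        rcases lt_trichotomy i j with hij | hij | hij
        · exact h2 (i, j) (by simp [hPairs, hadj, hij])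
        · subst hij; exact absurd hadj H.irrefl
        · exact (h2 (j, i) (by simp [hPairs, hadj.symm, hij])).symm
    rw [canonicalCount, hset, Set.ncard_coe_finset]
    rw [Finset.sum_congr rfl (fun f _ => prod_chi_boole G (hPairs H) f), Finset.sum_boole]
  rw [hcc]
  have hcore := core_bound hn H G P hcard hε hreg (hPairs H) (fun s hs => hs)
  refine le_trans hcore ?_
  have hnk : (0:ℝ) ≤ (n:ℝ)^k := by positivity
  have hm1 : (0:ℝ) < ((hPairs H).card : ℝ) + 1 := by positivity
  have hkey : ((hPairs H).card : ℝ) * (δ / (((hPairs H).card : ℝ) + 1)) ≤ δ := by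
    calc ((hPairs H).card : ℝ) * (δ / (((hPairs H).card : ℝ) + 1))
        = δ * (((hPairs H).card : ℝ) / (((hPairs H).card : ℝ) + 1)) := by ring
      _ ≤ δ * 1 := by
          apply mul_le_mul_of_nonneg_left _ hδ.le
          rw [div_le_one hm1]
          linarith
      _ = δ := mul_one δ
  calc ((hPairs H).card : ℝ) * (δ / (((hPairs H).card : ℝ) + 1) * (n:ℝ)^k)
      = (((hPairs H).card : ℝ) * (δ / (((hPairs H).card : ℝ) + 1))) * (n:ℝ)^k := by ring
    _ ≤ δ * (n:ℝ)^k := mul_le_mul_of_nonneg_right hkey hnk
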